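/- If the sequent Γ ⊢ A has a classical proof and A is not an atomic proposition, then the sequent ‖Γ‖ ⊢ ‖A‖ has a constructive proof. -/

import Mathlib

/-- Terms: de Bruijn variables and a binary function symbol (union). -/
inductive Tm : Type where
  | var : Nat → Tm
  | cup : Tm → Tm → Tm
deriving DecidableEq

def Tm.rename (f : Nat → Nat) : Tm → Tm
  | .var n => .var (f n)
  | .cup s t => .cup (s.rename f) (t.rename f)

def Tm.subst (σ : Nat → Tm) : Tm → Tm
  | .var n => σ n
  | .cup s t => .cup (s.subst σ) (t.subst σ)

/-- First-order formulas over Nat-indexed predicate symbols, de Bruijn binders. -/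
inductive Fm : Type where
  | atom : Nat → List Tm → Fm
  | top : Fm
  | bot : Fm
  | neg : Fm → Fm
  | and : Fm → Fm → Fm
  | or : Fm → Fm → Fm
  | imp : Fm → Fm → Fm
  | all : Fm → Fm
  | ex : Fm → Fm
deriving DecidableEq

def liftR (f : Nat → Nat) : Nat → Nat
  | 0 => 0
  | n + 1 => f n + 1

def liftS (σ : Nat → Tm) : Nat → Tm
  | 0 => .var 0
  | n + 1 => (σ n).rename Nat.succ

def Fm.rename (f : Nat → Nat) : Fm → Fm
  | .atom p l => .atom p (l.map (Tm.rename f))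
  | .top => .top
  | .bot => .bot
  | .neg A => .neg (A.rename f)
  | .and A B => .and (A.rename f) (B.rename f)
  | .or A B => .or (A.rename f) (B.rename f)
  | .imp A B => .imp (A.rename f) (B.rename f)
  | .all A => .all (A.rename (liftR f))
  | .ex A => .ex (A.rename (liftR f))

def Fm.subst (σ : Nat → Tm) : Fm → Fm
  | .atom p l => .atom p (l.map (Tm.subst σ))
  | .top => .top
  | .bot => .bot
  | .neg A => .neg (A.subst σ)
  | .and A B => .and (A.subst σ) (B.subst σ)
  | .or A B => .or (A.subst σ) (B.subst σ)
  | .imp A B => .imp (A.subst σ) (B.subst σ)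
  | .all A => .all (A.subst (liftS σ))
  | .ex A => .ex (A.subst (liftS σ))

/-- Shift all free variables up by one. -/
def Fm.shift (A : Fm) : Fm := A.rename Nat.succ

/-- Instantiate the outermost bound variable with term `t` : `(t/x)A`. -/
def Fm.inst (t : Tm) (A : Fm) : Fm :=
  A.subst (fun n => match n with | 0 => t | n + 1 => .var n)

/-- Double negation. -/
def Fm.dn (A : Fm) : Fm := .neg (.neg A)

/-- Cut-free classical multi-conclusion sequent calculus (Figure 1). -/
inductive Cl : List Fm → List Fm → Prop where
  | ax (A : Fm) : Cl [A] [A]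
  | perm {Γ Γ' Δ Δ'} : Γ.Perm Γ' → Δ.Perm Δ' → Cl Γ Δ → Cl Γ' Δ'
  | contrL {Γ Δ A} : Cl (A :: A :: Γ) Δ → Cl (A :: Γ) Δ
  | contrR {Γ Δ A} : Cl Γ (A :: A :: Δ) → Cl Γ (A :: Δ)
  | weakL {Γ Δ A} : Cl Γ Δ → Cl (A :: Γ) Δ
  | weakR {Γ Δ A} : Cl Γ Δ → Cl Γ (A :: Δ)
  | topR {Γ Δ} : Cl Γ (.top :: Δ)
  | botL {Γ Δ} : Cl (.bot :: Γ) Δ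
  | negL {Γ Δ A} : Cl Γ (A :: Δ) → Cl (.neg A :: Γ) Δ
  | negR {Γ Δ A} : Cl (A :: Γ) Δ → Cl Γ (.neg A :: Δ)
  | andL {Γ Δ A B} : Cl (A :: B :: Γ) Δ → Cl (.and A B :: Γ) Δ
  | andR {Γ Δ A B} : Cl Γ (A :: Δ) → Cl Γ (B :: Δ) → Cl Γ (.and A B :: Δ)
  | orL {Γ Δ A B} : Cl (A :: Γ) Δ → Cl (B :: Γ) Δ → Cl (.or A B :: Γ) Δ
  | orR1 {Γ Δ A B} : Cl Γ (A :: Δ) → Cl Γ (.or A B :: Δ)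
  | orR2 {Γ Δ A B} : Cl Γ (B :: Δ) → Cl Γ (.or A B :: Δ)
  | impL {Γ Δ A B} : Cl Γ (A :: Δ) → Cl (B :: Γ) Δ → Cl (.imp A B :: Γ) Δ
  | impR {Γ Δ A B} : Cl (A :: Γ) (B :: Δ) → Cl Γ (.imp A B :: Δ)
  | allL {Γ Δ A} (t : Tm) : Cl (A.inst t :: Γ) Δ → Cl (.all A :: Γ) Δ
  | allR {Γ Δ A} : Cl (Γ.map Fm.shift) (A :: Δ.map Fm.shift) → Cl Γ (.all A :: Δ)
  | exL {Γ Δ A} : Cl (A :: Γ.map Fm.shift) (Δ.map Fm.shift) → Cl (.ex A :: Γ) Δ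
  | exR {Γ Δ A} (t : Tm) : Cl Γ (A.inst t :: Δ) → Cl Γ (.ex A :: Δ)

/-- Constructive (intuitionistic) single-conclusion sequent calculus:
the restriction of the classical calculus to sequents with at most one
conclusion, with the adapted ⇒-left rule. -/
inductive Intu : List Fm → Option Fm → Prop where
  | ax (A : Fm) : Intu [A] (some A)
  | perm {Γ Γ' Δ} : Γ.Perm Γ' → Intu Γ Δ → Intu Γ' Δ
  | contrL {Γ Δ A} : Intu (A :: A :: Γ) Δ → Intu (A :: Γ) Δ
  | weakL {Γ Δ A} : Intu Γ Δ → Intu (A :: Γ) Δ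
  | weakR {Γ A} : Intu Γ none → Intu Γ (some A)
  | topR {Γ} : Intu Γ (some .top)
  | botL {Γ Δ} : Intu (.bot :: Γ) Δ
  | negL {Γ A} : Intu Γ (some A) → Intu (.neg A :: Γ) none
  | negR {Γ A} : Intu (A :: Γ) none → Intu Γ (some (.neg A))
  | andL {Γ Δ A B} : Intu (A :: B :: Γ) Δ → Intu (.and A B :: Γ) Δ
  | andR {Γ A B} : Intu Γ (some A) → Intu Γ (some B) → Intu Γ (some (.and A B))
  | orL {Γ Δ A B} : Intu (A :: Γ) Δ → Intu (B :: Γ) Δ → Intu (.or A B :: Γ) Δ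
  | orR1 {Γ A B} : Intu Γ (some A) → Intu Γ (some (.or A B))
  | orR2 {Γ A B} : Intu Γ (some B) → Intu Γ (some (.or A B))
  | impL {Γ Δ A B} : Intu Γ (some A) → Intu (B :: Γ) Δ → Intu (.imp A B :: Γ) Δ
  | impR {Γ A B} : Intu (A :: Γ) (some B) → Intu Γ (some (.imp A B))
  | allL {Γ Δ A} (t : Tm) : Intu (A.inst t :: Γ) Δ → Intu (.all A :: Γ) Δ
  | allR {Γ A} : Intu (Γ.map Fm.shift) (some A) → Intu Γ (some (.all A))
  | exL {Γ Δ A} : Intu (A :: Γ.map Fm.shift) (Δ.map Fm.shift) → Intu (.ex A :: Γ) Δ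
  | exR {Γ A} (t : Tm) : Intu Γ (some (A.inst t)) → Intu Γ (some (.ex A))

/-- Dowek's translation ‖·‖: double negations both before and after each
connective and quantifier, atoms unchanged. -/
def Fm.bar : Fm → Fm
  | .atom p l => .atom p l
  | .top => Fm.dn .top
  | .bot => Fm.dn .bot
  | .neg A => Fm.dn (Fm.dn (.neg A.bar))
  | .and A B => Fm.dn (.and (Fm.dn A.bar) (Fm.dn B.bar))
  | .or A B => Fm.dn (.or (Fm.dn A.bar) (Fm.dn B.bar))
  | .imp A B => Fm.dn (.imp (Fm.dn A.bar) (Fm.dn B.bar))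
  | .all A => Fm.dn (.all (Fm.dn A.bar))
  | .ex A => Fm.dn (.ex (Fm.dn A.bar))

/-- The light translation |·|: like ‖·‖ but the outermost double negation
is removed. -/
def Fm.light : Fm → Fm
  | .atom p l => .atom p l
  | .top => .top
  | .bot => .bot
  | .neg A => .neg (Fm.dn A.bar)
  | .and A B => .and (Fm.dn A.bar) (Fm.dn B.bar)
  | .or A B => .or (Fm.dn A.bar) (Fm.dn B.bar)
  | .imp A B => .imp (Fm.dn A.bar) (Fm.dn B.bar)
  | .all A => .all (Fm.dn A.bar)
  | .ex A => .ex (Fm.dn A.bar)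

/-- A formula is atomic if it is of the form `atom p l`. -/
def Fm.isAtom : Fm → Prop
  | .atom _ _ => True
  | _ => False


/-! ### Auxiliary lemmas -/

theorem bar_rename (A : Fm) : ∀ f, (A.rename f).bar = A.bar.rename f := by
  induction A <;> intro f <;>
    simp [Fm.rename, Fm.bar, Fm.dn, *]

theorem bar_subst (A : Fm) : ∀ σ, (A.subst σ).bar = A.bar.subst σ := by
  induction A <;> intro σ <;>
    simp [Fm.subst, Fm.bar, Fm.dn, *]

theorem bar_shift (A : Fm) : (A.shift).bar = A.bar.shift := bar_rename A _

theorem bar_inst (A : Fm) (t : Tm) : (A.inst t).bar = A.bar.inst t := bar_subst A _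

theorem Intu.dnL {Γ : List Fm} {X : Fm} (h : Intu (X :: Γ) none) :
    Intu (X.dn :: Γ) none := Intu.negL (Intu.negR h)

theorem map_bar_shift (l : List Fm) :
    (l.map Fm.shift).map Fm.bar = (l.map Fm.bar).map Fm.shift := by
  simp only [List.map_map]; exact List.map_congr_left fun a _ => bar_shift a

theorem map_nb_shift (l : List Fm) :
    (l.map Fm.shift).map (fun D => Fm.neg D.bar)
      = (l.map (fun D => Fm.neg D.bar)).map Fm.shift := by
  simp only [List.map_map]
  refine List.map_congr_left fun a _ => ?_
  simp only [Function.comp, bar_shift]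
  rfl

theorem clToIntu : ∀ {Γ Δ : List Fm}, Cl Γ Δ →
    Intu (Γ.map Fm.bar ++ Δ.map (fun D => Fm.neg D.bar)) none := by
  intro Γ Δ h
  induction h with
  | ax A =>
      simp only [List.map_cons, List.map_nil, List.cons_append, List.nil_append]
      exact Intu.perm (List.Perm.swap _ _ _) (Intu.negL (Intu.ax _))
  | perm pΓ pΔ _ ih =>
      exact Intu.perm ((pΓ.map _).append (pΔ.map _)) ih
  | contrL _ ih =>
      simp only [List.map_cons, List.cons_append] at ih ⊢
      exact Intu.contrL ih
  | contrR _ ih =>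
      simp only [List.map_cons, List.cons_append] at ih ⊢
      refine Intu.perm List.perm_middle.symm (Intu.contrL ?_)
      exact Intu.perm (List.perm_middle.trans (List.Perm.cons _ List.perm_middle)) ih
  | weakL _ ih =>
      simp only [List.map_cons, List.cons_append]
      exact Intu.weakL ih
  | weakR _ ih =>
      simp only [List.map_cons, List.cons_append]
      exact Intu.perm List.perm_middle.symm (Intu.weakL ih)
  | topR =>
      simp only [List.map_cons, List.cons_append, Fm.bar, Fm.dn]
      refine Intu.perm List.perm_middle.symm ?_
      exact Intu.negL (Intu.negR (Intu.negL Intu.topR))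
  | botL =>
      simp only [List.map_cons, List.cons_append, Fm.bar]
      exact Intu.dnL Intu.botL
  | negL _ ih =>
      simp only [List.map_cons, List.cons_append, Fm.bar] at ih ⊢
      exact Intu.dnL (Intu.negL (Intu.negR (Intu.perm List.perm_middle ih)))
  | negR _ ih =>
      simp only [List.map_cons, List.cons_append, Fm.bar] at ih ⊢
      refine Intu.perm List.perm_middle.symm ?_
      exact Intu.negL (Intu.negR (Intu.dnL (Intu.dnL ih)))
  | andL _ ih =>
      simp only [List.map_cons, List.cons_append, Fm.bar] at ih ⊢
      refine Intu.dnL (Intu.andL (Intu.dnL ?_))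
      refine Intu.perm (List.Perm.swap _ _ _) (Intu.dnL ?_)
      exact Intu.perm (List.Perm.swap _ _ _) ih
  | andR _ _ ih1 ih2 =>
      simp only [List.map_cons, List.cons_append, Fm.bar] at ih1 ih2 ⊢
      refine Intu.perm List.perm_middle.symm ?_
      refine Intu.negL (Intu.negR (Intu.negL ?_))
      exact Intu.andR (Intu.negR (Intu.perm List.perm_middle ih1))
        (Intu.negR (Intu.perm List.perm_middle ih2))
  | orL _ _ ih1 ih2 =>
      simp only [List.map_cons, List.cons_append, Fm.bar] at ih1 ih2 ⊢
      exact Intu.dnL (Intu.orL (Intu.dnL ih1) (Intu.dnL ih2))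
  | orR1 _ ih =>
      simp only [List.map_cons, List.cons_append, Fm.bar] at ih ⊢
      refine Intu.perm List.perm_middle.symm ?_
      refine Intu.negL (Intu.negR (Intu.negL ?_))
      exact Intu.orR1 (Intu.negR (Intu.perm List.perm_middle ih))
  | orR2 _ ih =>
      simp only [List.map_cons, List.cons_append, Fm.bar] at ih ⊢
      refine Intu.perm List.perm_middle.symm ?_
      refine Intu.negL (Intu.negR (Intu.negL ?_))
      exact Intu.orR2 (Intu.negR (Intu.perm List.perm_middle ih))
  | impL _ _ ih1 ih2 =>
      simp only [List.map_cons, List.cons_append, Fm.bar] at ih1 ih2 ⊢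
      refine Intu.dnL (Intu.impL ?_ ?_)
      · exact Intu.negR (Intu.perm List.perm_middle ih1)
      · exact Intu.dnL ih2
  | impR _ ih =>
      simp only [List.map_cons, List.cons_append, Fm.bar] at ih ⊢
      refine Intu.perm List.perm_middle.symm ?_
      refine Intu.negL (Intu.negR (Intu.negL ?_))
      refine Intu.impR (Intu.negR ?_)
      refine Intu.perm (List.Perm.swap _ _ _) (Intu.dnL ?_)
      exact Intu.perm (List.Perm.cons _ List.perm_middle) ih
  | allL t _ ih =>
      simp only [List.map_cons, List.cons_append, Fm.bar, bar_inst] at ih ⊢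
      refine Intu.dnL (Intu.allL t ?_)
      show Intu (Fm.dn _ :: _) none
      exact Intu.dnL ih
  | allR _ ih =>
      simp only [List.map_cons, List.cons_append, List.map_append, Fm.bar,
        map_bar_shift, map_nb_shift] at ih ⊢
      refine Intu.perm List.perm_middle.symm ?_
      refine Intu.negL (Intu.negR (Intu.negL ?_))
      refine Intu.allR (Intu.negR ?_)
      simp only [List.map_append]
      exact Intu.perm List.perm_middle ih
  | exL _ ih =>
      simp only [List.map_cons, List.cons_append, Fm.bar,
        map_bar_shift, map_nb_shift] at ih ⊢
      refine Intu.dnL (Intu.exL ?_)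
      show Intu (Fm.dn _ :: _) (Option.map Fm.shift none)
      simp only [Option.map_none, List.map_append]
      exact Intu.dnL ih
  | exR t _ ih =>
      simp only [List.map_cons, List.cons_append, Fm.bar, bar_inst] at ih ⊢
      refine Intu.perm List.perm_middle.symm ?_
      refine Intu.negL (Intu.negR (Intu.negL ?_))
      refine Intu.exR t (Intu.negR ?_)
      exact Intu.perm List.perm_middle ih

/-- Invertibility of the right negation rule. -/
theorem inv_negR : ∀ {Γ : List Fm} {Δ : Option Fm}, Intu Γ Δ →
    ∀ A : Fm, Δ = some (.neg A) → Intu (A :: Γ) none := by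
  intro Γ Δ h
  induction h with
  | ax B =>
      intro A hA
      injection hA with e
      subst e
      exact Intu.perm (List.Perm.swap _ _ _) (Intu.negL (Intu.ax _))
  | perm p _ ih =>
      intro A hA
      exact Intu.perm (List.Perm.cons _ p) (ih A hA)
  | contrL hp ih =>
      rename_i Γ0 Δ0 B
      intro A hA
      refine Intu.perm (List.Perm.swap _ _ _) (Intu.contrL ?_)
      exact Intu.perm ((List.perm_middle (l₁ := [B, B])).symm) (ih A hA)
  | weakL _ ih =>
      intro A hA
      exact Intu.perm (List.Perm.swap _ _ _) (Intu.weakL (ih A hA))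
  | weakR h =>
      intro A hA
      exact Intu.weakL h
  | topR => intro A hA; cases hA
  | botL =>
      intro A hA
      exact Intu.perm (List.Perm.swap _ _ _) Intu.botL
  | negL _ _ => intro A hA; cases hA
  | negR h _ =>
      intro A hA
      injection hA with e
      injection e with e2
      subst e2
      exact h
  | andL hp ih =>
      rename_i Γ0 Δ0 B C
      intro A hA
      refine Intu.perm (List.Perm.swap _ _ _) (Intu.andL ?_)
      exact Intu.perm ((List.perm_middle (l₁ := [B, C])).symm) (ih A hA)
  | andR _ _ _ _ => intro A hA; cases hA
  | orL _ _ ih1 ih2 =>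
      intro A hA
      refine Intu.perm (List.Perm.swap _ _ _) (Intu.orL ?_ ?_)
      · exact Intu.perm (List.Perm.swap _ _ _) (ih1 A hA)
      · exact Intu.perm (List.Perm.swap _ _ _) (ih2 A hA)
  | orR1 _ _ => intro A hA; cases hA
  | orR2 _ _ => intro A hA; cases hA
  | impL h1 _ _ ih2 =>
      intro A hA
      refine Intu.perm (List.Perm.swap _ _ _) (Intu.impL (Intu.weakL h1) ?_)
      exact Intu.perm (List.Perm.swap _ _ _) (ih2 A hA)
  | impR _ _ => intro A hA; cases hA
  | allL t _ ih =>
      intro A hA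
      refine Intu.perm (List.Perm.swap _ _ _) (Intu.allL t ?_)
      exact Intu.perm (List.Perm.swap _ _ _) (ih A hA)
  | allR _ _ => intro A hA; cases hA
  | exL _ ih =>
      intro A hA
      subst hA
      refine Intu.perm (List.Perm.swap _ _ _) (Intu.exL ?_)
      show Intu (_ :: (A :: _).map Fm.shift) (Option.map Fm.shift none)
      simp only [List.map_cons, Option.map_none]
      exact Intu.perm (List.Perm.swap _ _ _) (ih A.shift rfl)
  | exR t _ _ => intro A hA; cases hA

/-- Replacement relation: a context formula `¬¬¬X` may be strengthened to `¬X`. -/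
def Rp (a b : Fm) : Prop := b = a ∨ ∃ X : Fm, a = .neg (Fm.dn X) ∧ b = .neg X

theorem Rp.refl (a : Fm) : Rp a a := Or.inl rfl

theorem Rp.shift {a b : Fm} (h : Rp a b) : Rp a.shift b.shift := by
  rcases h with rfl | ⟨X, rfl, rfl⟩
  · exact Or.inl rfl
  · exact Or.inr ⟨X.shift, rfl, rfl⟩

theorem forall₂_rp_refl (l : List Fm) : List.Forall₂ Rp l l := by
  induction l with
  | nil => exact List.Forall₂.nil
  | cons a t ih => exact List.Forall₂.cons (Rp.refl a) ih

theorem forall₂_rp_shift : ∀ {l l' : List Fm}, List.Forall₂ Rp l l' →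
    List.Forall₂ Rp (l.map Fm.shift) (l'.map Fm.shift) := by
  intro l l' h
  induction h with
  | nil => exact List.Forall₂.nil
  | cons h _ ih => exact List.Forall₂.cons h.shift ih

theorem perm_forall₂ {α : Type} {R : α → α → Prop} :
    ∀ {l₁ l₂ : List α}, l₁.Perm l₂ → ∀ {l₂' : List α}, List.Forall₂ R l₂ l₂' →
      ∃ l₁', List.Forall₂ R l₁ l₁' ∧ l₁'.Perm l₂' := by
  intro l₁ l₂ p
  induction p with
  | nil =>
      intro l₂' h
      cases h
      exact ⟨[], List.Forall₂.nil, List.Perm.nil⟩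
  | cons a p ih =>
      intro l₂' h
      cases h with
      | cons hb ht =>
          obtain ⟨t₁', ht₁, hp⟩ := ih ht
          exact ⟨_ :: t₁', List.Forall₂.cons hb ht₁, List.Perm.cons _ hp⟩
  | swap a b l =>
      intro l₂' h
      cases h with
      | cons h1 h2 =>
        cases h2 with
        | cons h3 h4 =>
          exact ⟨_ :: _ :: _, List.Forall₂.cons h3 (List.Forall₂.cons h1 h4),
            List.Perm.swap _ _ _⟩
  | trans p q ihp ihq =>
      intro l₂' h
      obtain ⟨lm', hm, pm⟩ := ihq h
      obtain ⟨l₁', h1, p1⟩ := ihp hm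
      exact ⟨l₁', h1, p1.trans pm⟩

/-- Strengthening `¬¬¬X` to `¬X` in the context is admissible. -/
theorem rp_admissible : ∀ {Γ : List Fm} {Δ : Option Fm}, Intu Γ Δ →
    ∀ {Γ' : List Fm}, List.Forall₂ Rp Γ Γ' → Intu Γ' Δ := by
  intro Γ Δ h
  induction h with
  | ax A =>
      intro Γ' hF
      cases hF with
      | cons hb ht =>
        cases ht
        rcases hb with rfl | ⟨X, rfl, rfl⟩
        · exact Intu.ax _
        · exact Intu.negR (Intu.negL (Intu.ax _))
  | perm p _ ih =>
      intro Γ' hF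
      obtain ⟨l₁', h1, p1⟩ := perm_forall₂ p hF
      exact Intu.perm p1 (ih h1)
  | contrL _ ih =>
      intro Γ' hF
      cases hF with
      | cons hb ht =>
        exact Intu.contrL (ih (List.Forall₂.cons hb (List.Forall₂.cons hb ht)))
  | weakL _ ih =>
      intro Γ' hF
      cases hF with
      | cons hb ht => exact Intu.weakL (ih ht)
  | weakR _ ih => intro Γ' hF; exact Intu.weakR (ih hF)
  | topR => intro Γ' hF; exact Intu.topR
  | botL =>
      intro Γ' hF
      cases hF with
      | cons hb ht =>
        rcases hb with rfl | ⟨X, hx, rfl⟩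
        · exact Intu.botL
        · cases hx
  | negL _ ih =>
      intro Γ' hF
      cases hF with
      | cons hb ht =>
        rcases hb with rfl | ⟨X, hx, rfl⟩
        · exact Intu.negL (ih ht)
        · injection hx with e
          subst e
          exact inv_negR (ih ht) _ rfl
  | negR _ ih =>
      intro Γ' hF
      exact Intu.negR (ih (List.Forall₂.cons (Rp.refl _) hF))
  | andL _ ih =>
      intro Γ' hF
      cases hF with
      | cons hb ht =>
        rcases hb with rfl | ⟨X, hx, rfl⟩
        · exact Intu.andL
            (ih (List.Forall₂.cons (Rp.refl _) (List.Forall₂.cons (Rp.refl _) ht)))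
        · cases hx
  | andR _ _ ih1 ih2 =>
      intro Γ' hF
      exact Intu.andR (ih1 hF) (ih2 hF)
  | orL _ _ ih1 ih2 =>
      intro Γ' hF
      cases hF with
      | cons hb ht =>
        rcases hb with rfl | ⟨X, hx, rfl⟩
        · exact Intu.orL (ih1 (List.Forall₂.cons (Rp.refl _) ht))
            (ih2 (List.Forall₂.cons (Rp.refl _) ht))
        · cases hx
  | orR1 _ ih => intro Γ' hF; exact Intu.orR1 (ih hF)
  | orR2 _ ih => intro Γ' hF; exact Intu.orR2 (ih hF)
  | impL _ _ ih1 ih2 =>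
      intro Γ' hF
      cases hF with
      | cons hb ht =>
        rcases hb with rfl | ⟨X, hx, rfl⟩
        · exact Intu.impL (ih1 ht) (ih2 (List.Forall₂.cons (Rp.refl _) ht))
        · cases hx
  | impR _ ih =>
      intro Γ' hF
      exact Intu.impR (ih (List.Forall₂.cons (Rp.refl _) hF))
  | allL t _ ih =>
      intro Γ' hF
      cases hF with
      | cons hb ht =>
        rcases hb with rfl | ⟨X, hx, rfl⟩
        · exact Intu.allL t (ih (List.Forall₂.cons (Rp.refl _) ht))
        · cases hx
  | allR _ ih =>
      intro Γ' hF
      exact Intu.allR (ih (forall₂_rp_shift hF))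
  | exL _ ih =>
      intro Γ' hF
      cases hF with
      | cons hb ht =>
        rcases hb with rfl | ⟨X, hx, rfl⟩
        · exact Intu.exL
            (ih (List.Forall₂.cons (Rp.refl _) (forall₂_rp_shift ht)))
        · cases hx
  | exR t _ ih => intro Γ' hF; exact Intu.exR t (ih hF)

theorem stmt3 (Γ : List Fm) (A : Fm) (h : Cl Γ [A]) (hA : ¬ A.isAtom) :
    Intu (Γ.map Fm.bar) (some A.bar) := by
  have m := clToIntu h
  simp only [List.map_cons, List.map_nil] at m
  have m2 : Intu (Fm.neg A.bar :: Γ.map Fm.bar) none := Intu.perm (List.perm_middle.trans (by simp)) m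
  obtain ⟨X, hX⟩ : ∃ X : Fm, A.bar = Fm.dn X := by
    cases A <;> first | exact absurd trivial hA | exact ⟨_, rfl⟩
  rw [hX] at m2 ⊢
  refine Intu.negR ?_
  exact rp_admissible m2
    (List.Forall₂.cons (Or.inr ⟨X, rfl, rfl⟩) (forall₂_rp_refl _))
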